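/- For every positive integer m, base b ≥ 2, and k with 1 ≤ k ≤ b-1, the number of integers i in {1,...,m} whose last nonzero base-b digit equals b-k is (m - D_m)/(b-1) + Σ_{j≥0} 1[m_j ≥ b-k], where m = Σ_j m_j b^j is the base-b expansion of m and D_m = Σ_j m_j. -/

import Mathlib

open Finset

private lemma count_mod_eq (m n r : ℕ) (h1 : 1 ≤ r) (h2 : r < n) :
    ((Finset.Icc 1 m).filter (fun i => i % n = r)).card = (m + n - r) / n := by
  have hn : 0 < n := lt_of_le_of_lt (Nat.zero_le r) h2
  have himg : (Finset.Icc 1 m).filter (fun i => i % n = r)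
      = (Finset.range ((m + n - r) / n)).image (fun t => r + n * t) := by
    ext i
    simp only [Finset.mem_filter, Finset.mem_Icc, Finset.mem_image, Finset.mem_range]
    constructor
    · rintro ⟨⟨hi1, hi2⟩, hmod⟩
      refine ⟨i / n, ?_, ?_⟩
      · have hda := Nat.div_add_mod i n
        have h4 : (i / n + 1) * n ≤ m + n - r := by
          have h5 : (i / n + 1) * n = n * (i / n) + n := by ring
          omega
        exact (Nat.le_div_iff_mul_le hn).mpr h4
      · have := Nat.div_add_mod i n; omega
    · rintro ⟨t, ht, rfl⟩
      have h4 : (t + 1) * n ≤ m + n - r := by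
        calc (t + 1) * n ≤ ((m + n - r) / n) * n := Nat.mul_le_mul_right n ht
          _ ≤ m + n - r := Nat.div_mul_le_self _ _
      have h5 : (t + 1) * n = n * t + n := by ring
      refine ⟨⟨by omega, by omega⟩, ?_⟩
      simp [Nat.add_mul_mod_self_left, Nat.mod_eq_of_lt h2]
  rw [himg, Finset.card_image_of_injective _ ?_, Finset.card_range]
  intro a c h
  have h2 : r + n * a = r + n * c := h
  have h3 : n * a = n * c := by omega
  exact Nat.eq_of_mul_eq_mul_left hn h3

private lemma div_add_ite (m n r : ℕ) (h1 : 1 ≤ r) (h2 : r < n) :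
    (m + n - r) / n = m / n + (if r ≤ m % n then 1 else 0) := by
  have hn : 0 < n := by omega
  have hdm := Nat.div_add_mod m n
  have hmod := Nat.mod_lt m hn
  split_ifs with h
  · have key : m + n - r = (m % n - r) + n * (m / n + 1) := by
      have : n * (m / n + 1) = n * (m / n) + n := by ring
      omega
    rw [key, Nat.add_mul_div_left _ _ hn, Nat.div_eq_of_lt (by omega)]
    omega
  · have key : m + n - r = (m % n + n - r) + n * (m / n) := by omega
    rw [key, Nat.add_mul_div_left _ _ hn, Nat.div_eq_of_lt (by omega)]
    omega

private lemma digit_le_iff (b m j d : ℕ) (hb : 2 ≤ b) (hd : d < b) :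
    (d ≤ m / b ^ j % b) ↔ d * b ^ j ≤ m % b ^ (j + 1) := by
  have hbj : 0 < b ^ j := pow_pos (by omega) _
  have hkey : m % b ^ (j + 1) = m % b ^ j + b ^ j * (m / b ^ j % b) := by
    rw [pow_succ, Nat.mod_mul]
  have hs : m % b ^ j < b ^ j := Nat.mod_lt _ hbj
  rw [hkey]
  constructor
  · intro h
    calc d * b ^ j ≤ (m / b ^ j % b) * b ^ j := Nat.mul_le_mul_right _ h
      _ = b ^ j * (m / b ^ j % b) := by ring
      _ ≤ m % b ^ j + b ^ j * (m / b ^ j % b) := Nat.le_add_left _ _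
  · intro h
    by_contra hc
    push_neg at hc
    have h1 : m % b ^ j + b ^ j * (m / b ^ j % b) < b ^ j * (m / b ^ j % b + 1) := by
      have : b ^ j * (m / b ^ j % b + 1) = b ^ j * (m / b ^ j % b) + b ^ j := by ring
      omega
    have h2 : b ^ j * (m / b ^ j % b + 1) ≤ b ^ j * d := Nat.mul_le_mul_left _ hc
    have h3 : b ^ j * d = d * b ^ j := by ring
    omega

private lemma sum_div_eq_legendre (b m : ℕ) (hb : 2 ≤ b) :
    ∑ j ∈ Finset.range (m + 1), m / b ^ (j + 1)
      = (m - (Nat.digits b m).sum) / (b - 1) := by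
  have key := Nat.sub_one_mul_sum_log_div_pow_eq_sub_sum_digits (p := b) m
  have hsub : ∑ j ∈ Finset.range (m + 1), m / b ^ (j + 1)
      = ∑ i ∈ Finset.range (Nat.log b m + 1), m / b ^ (i + 1) := by
    apply (Finset.sum_subset ?_ ?_).symm
    · intro x hx
      simp only [Finset.mem_range] at *
      have := Nat.log_le_self b m
      omega
    · intro x hx hx2
      simp only [Finset.mem_range] at hx hx2
      have hlog : Nat.log b m + 1 ≤ x + 1 := by omega
      have h1 : m < b ^ (Nat.log b m + 1) := Nat.lt_pow_succ_log_self (by omega) m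
      have h2 : b ^ (Nat.log b m + 1) ≤ b ^ (x + 1) :=
        Nat.pow_le_pow_right (by omega) hlog
      exact Nat.div_eq_of_lt (by omega)
  rw [hsub]
  exact (Nat.div_eq_of_eq_mul_left (by omega) (by rw [← key]; ring)).symm

private lemma maxPowDiv_of_mod (b i j d : ℕ) (hb : 2 ≤ b) (hi : 0 < i) (hd1 : 1 ≤ d)
    (hdb : d < b) (h : i % b ^ (j + 1) = d * b ^ j) :
    Nat.maxPowDiv b i = j ∧ i / b ^ j % b = d := by
  have hbj : 0 < b ^ j := pow_pos (by omega) _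
  have hdam := Nat.div_add_mod i (b ^ (j + 1))
  have hi2 : i = b ^ (j + 1) * (i / b ^ (j + 1)) + d * b ^ j := by omega
  have hifac : i = b ^ j * (b * (i / b ^ (j + 1)) + d) := by
    nth_rewrite 1 [hi2]; ring
  have hdiv : i / b ^ j = b * (i / b ^ (j + 1)) + d := by
    conv_lhs => rw [hifac]
    rw [Nat.mul_div_cancel_left _ hbj]
  have hmod : i / b ^ j % b = d := by rw [hdiv, Nat.mul_add_mod, Nat.mod_eq_of_lt hdb]
  refine ⟨?_, hmod⟩
  have hdvd : b ^ j ∣ i := ⟨_, hifac⟩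
  have hle : j ≤ Nat.maxPowDiv b i := (Nat.pow_dvd_iff_le_padicValNat (p := b) (n := i) (by omega) (by omega)).mp hdvd
  by_contra hne
  have hlt : j + 1 ≤ Nat.maxPowDiv b i := by omega
  have hd2 : b ^ (j + 1) ∣ i :=
    dvd_trans (pow_dvd_pow b hlt) Nat.maxPowDiv.pow_dvd
  obtain ⟨t, ht⟩ := hd2
  have hz : i % b ^ (j + 1) = 0 := by simp [ht, Nat.mul_mod_right]
  have hpos : 0 < d * b ^ j := Nat.mul_pos (by omega) hbj
  omega

private lemma mod_of_maxPowDiv (b i d : ℕ) (hb : 2 ≤ b) (hi : 0 < i) (hd1 : 1 ≤ d)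
    (h : i / b ^ Nat.maxPowDiv b i % b = d) :
    i % b ^ (Nat.maxPowDiv b i + 1) = d * b ^ Nat.maxPowDiv b i := by
  set v := Nat.maxPowDiv b i with hv
  obtain ⟨c, hc⟩ : b ^ v ∣ i := Nat.maxPowDiv.pow_dvd
  have hbv : 0 < b ^ v := pow_pos (by omega) _
  have hcv : i / b ^ v = c := by rw [hc]; exact Nat.mul_div_cancel_left c hbv
  rw [hcv] at h
  have hdb : d < b := by rw [← h]; exact Nat.mod_lt _ (by omega)
  have hc2 : c = b * (c / b) + d := by have := Nat.div_add_mod c b; omega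
  have hieq : i = b ^ (v + 1) * (c / b) + d * b ^ v := by
    rw [hc]; nth_rewrite 1 [hc2]; ring
  rw [hieq, Nat.mul_add_mod]
  apply Nat.mod_eq_of_lt
  calc d * b ^ v < b * b ^ v := (Nat.mul_lt_mul_right hbv).mpr hdb
    _ = b ^ (v + 1) := by ring

private lemma maxPowDiv_le (b i : ℕ) (hb : 2 ≤ b) (hi : 0 < i) :
    Nat.maxPowDiv b i ≤ i := by
  set v := Nat.maxPowDiv b i with hv
  have h1 : b ^ v ∣ i := Nat.maxPowDiv.pow_dvd
  have h2 : b ^ v ≤ i := Nat.le_of_dvd hi h1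
  have h3 : 2 ^ v ≤ b ^ v := Nat.pow_le_pow_left (by omega) v
  have h4 : v < 2 ^ v := Nat.lt_two_pow_self
  omega

theorem count_last_nonzero_digit (b m k : ℕ) (hb : 2 ≤ b) (hm : 1 ≤ m)
    (hk1 : 1 ≤ k) (hk2 : k ≤ b - 1) :
    ((Finset.Icc 1 m).filter (fun i => (i / b ^ Nat.maxPowDiv b i) % b = b - k)).card
      = (m - (Nat.digits b m).sum) / (b - 1)
        + ((Finset.range (m + 1)).filter (fun j => b - k ≤ m / b ^ j % b)).card := by
  set d := b - k with hdk
  have hd1 : 1 ≤ d := by omega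
  have hdb : d < b := by omega
  have hpart : ((Finset.Icc 1 m).filter (fun i => (i / b ^ Nat.maxPowDiv b i) % b = d))
      = (Finset.range (m + 1)).biUnion
          (fun j => (Finset.Icc 1 m).filter (fun i => i % b ^ (j + 1) = d * b ^ j)) := by
    ext i
    simp only [Finset.mem_filter, Finset.mem_biUnion, Finset.mem_range, Finset.mem_Icc]
    constructor
    · rintro ⟨⟨hi1, hi2⟩, hP⟩
      refine ⟨Nat.maxPowDiv b i, ?_, ⟨hi1, hi2⟩, mod_of_maxPowDiv b i d hb (by omega) hd1 hP⟩
      have := maxPowDiv_le b i hb (by omega)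
      omega
    · rintro ⟨j, hj, ⟨hi1, hi2⟩, hmod⟩
      obtain ⟨he, hdig⟩ := maxPowDiv_of_mod b i j d hb (by omega) hd1 hdb hmod
      exact ⟨⟨hi1, hi2⟩, by rw [he]; exact hdig⟩
  rw [hpart, Finset.card_biUnion]
  · have hstep : ∀ j ∈ Finset.range (m + 1),
        ((Finset.Icc 1 m).filter (fun i => i % b ^ (j + 1) = d * b ^ j)).card
          = m / b ^ (j + 1) + (if d * b ^ j ≤ m % b ^ (j + 1) then 1 else 0) := by
      intro j _
      have hbj : 0 < b ^ j := pow_pos (by omega) _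
      have hr1 : 1 ≤ d * b ^ j := Nat.mul_pos (by omega) hbj
      have hr2 : d * b ^ j < b ^ (j + 1) := by
        calc d * b ^ j < b * b ^ j := (Nat.mul_lt_mul_right hbj).mpr hdb
          _ = b ^ (j + 1) := by ring
      rw [count_mod_eq m (b ^ (j + 1)) (d * b ^ j) hr1 hr2,
        div_add_ite m (b ^ (j + 1)) (d * b ^ j) hr1 hr2]
    rw [Finset.sum_congr rfl hstep, Finset.sum_add_distrib,
      sum_div_eq_legendre b m hb]
    congr 1
    rw [Finset.card_filter]
    apply Finset.sum_congr rfl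
    intro j _
    congr 1
    simp only [eq_iff_iff]
    exact (digit_le_iff b m j d hb hdb).symm
  · intro x _ y _ hxy
    rw [Function.onFun, Finset.disjoint_left]
    intro i hix hiy
    simp only [Finset.mem_filter, Finset.mem_Icc] at hix hiy
    obtain ⟨⟨hi1, _⟩, hmx⟩ := hix
    obtain ⟨_, hmy⟩ := hiy
    have h1 := (maxPowDiv_of_mod b i x d hb (by omega) hd1 hdb hmx).1
    have h2 := (maxPowDiv_of_mod b i y d hb (by omega) hd1 hdb hmy).1
    exact hxy (h1 ▸ h2 ▸ rfl)
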